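/- Let n ≥ 2, let d_1, …, d_n be unit vectors in ℂ^m, and let ρ_A be a density matrix on ℂ^n with q_i = (ρ_A)_{ii}. Then (P_s(q) − 1/n)² + V(ρ̃_A)² + M(ρ̃_A) ≤ (1 − 1/n)² + M(ρ̃_D), where M(ρ) = (2(n−1)/n²)(1 − Tr(ρ²)) is the normalized mixedness. -/

import Mathlib

open Matrix ComplexOrder

noncomputable section

/-- Inner product ⟨a, b⟩ = ∑ i, conj (a i) * b i on a finite-dimensional complex space. -/
def ip {k : Type*} [Fintype k] (a b : k → ℂ) : ℂ := ∑ i, star (a i) * b i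

/-- The optimal success probability of minimum-error discrimination of the detector
states `d i` with prior probabilities `q i`: the supremum over all POVMs
`Pov` (positive semidefinite matrices summing to the identity) of
`∑ i, q i * ⟨d i, Pov i (d i)⟩`. -/
def Ps {m n : ℕ} (d : Fin n → Fin m → ℂ) (q : Fin n → ℝ) : ℝ :=
  sSup { x : ℝ | ∃ Pov : Fin n → Matrix (Fin m) (Fin m) ℂ,
    (∀ i, (Pov i).PosSemidef) ∧ (∑ i, Pov i) = 1 ∧
    x = ∑ i, q i * (ip (d i) ((Pov i) *ᵥ (d i))).re }

/-- The visibility `V(ρ̃_A) = √( (2(n−1)/n²) ∑_{i≠k} |⟨d_k, d_i⟩|² |(ρ_A)_{ik}|² )`. -/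
def Vis {m n : ℕ} (d : Fin n → Fin m → ℂ) (ρ : Matrix (Fin n) (Fin n) ℂ) : ℝ :=
  Real.sqrt ((2 * ((n : ℝ) - 1) / (n : ℝ) ^ 2) *
    ∑ i, ∑ k, if i = k then 0 else ‖ip (d k) (d i)‖ ^ 2 * ‖ρ i k‖ ^ 2)

/-- The post-interaction detector state `ρ̃_D = ∑ i, q i • d i (d i)^*`. -/
def detState {m n : ℕ} (d : Fin n → Fin m → ℂ) (q : Fin n → ℝ) :
    Matrix (Fin m) (Fin m) ℂ :=
  ∑ i, (q i : ℂ) • vecMulVec (d i) (star (d i))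

/-- The post-interaction particle state `(ρ̃_A)_{ik} = ⟨d_k, d_i⟩ (ρ_A)_{ik}`. -/
def post {m n : ℕ} (d : Fin n → Fin m → ℂ) (ρ : Matrix (Fin n) (Fin n) ℂ) :
    Matrix (Fin n) (Fin n) ℂ :=
  Matrix.of fun i k => ip (d k) (d i) * ρ i k

/-- The purity `Tr(ρ²)` (as a real number). -/
def purity {k : Type*} [Fintype k] (ρ : Matrix k k ℂ) : ℝ := ((ρ * ρ).trace).re

/-- The normalized mixedness `M(ρ) = (2(n−1)/n²)(1 − Tr(ρ²))`. -/
def Mix {k : Type*} [Fintype k] (n : ℕ) (ρ : Matrix k k ℂ) : ℝ :=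
  (2 * ((n : ℝ) - 1) / (n : ℝ) ^ 2) * (1 - purity ρ)

lemma ip_eq_dot {k : Type*} [Fintype k] (a b : k → ℂ) : ip a b = star a ⬝ᵥ b := rfl

lemma cs_vec {k : Type*} [Fintype k] (x y : k → ℂ) :
    ‖ip x y‖ ^ 2 ≤ (ip x x).re * (ip y y).re := by
  classical
  let x' : EuclideanSpace ℂ k := (WithLp.equiv 2 _).symm x
  let y' : EuclideanSpace ℂ k := (WithLp.equiv 2 _).symm y
  have h1 : ip x y = inner ℂ x' y' := by
    rw [EuclideanSpace.inner_eq_star_dotProduct]; simp [ip, dotProduct, mul_comm, x', y']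
  have h2 : (ip x x).re = ‖x'‖ ^ 2 := by
    have h := inner_self_eq_norm_sq (𝕜 := ℂ) x'
    simp only [RCLike.re_to_complex] at h
    have : ip x x = inner ℂ x' x' := by rw [EuclideanSpace.inner_eq_star_dotProduct]; simp [ip, dotProduct, mul_comm, x']
    rw [this, h]
  have h3 : (ip y y).re = ‖y'‖ ^ 2 := by
    have h := inner_self_eq_norm_sq (𝕜 := ℂ) y'
    simp only [RCLike.re_to_complex] at h
    have : ip y y = inner ℂ y' y' := by rw [EuclideanSpace.inner_eq_star_dotProduct]; simp [ip, dotProduct, mul_comm, y']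
    rw [this, h]
  have h4 := norm_inner_le_norm (𝕜 := ℂ) x' y'
  rw [h1, h2, h3]
  calc ‖(inner ℂ x' y' : ℂ)‖ ^ 2 ≤ (‖x'‖ * ‖y'‖) ^ 2 := by
        apply pow_le_pow_left₀ (norm_nonneg _) h4
    _ = ‖x'‖ ^2 * ‖y'‖ ^ 2 := by ring

-- matrix Cauchy-Schwarz
lemma cs_mat {k : Type*} [Fintype k] {M : Matrix k k ℂ} [DecidableEq k] (hM : M.PosSemidef)
    (u v : k → ℂ) :
    ‖ip u (M *ᵥ v)‖ ^ 2 ≤ (ip u (M *ᵥ u)).re * (ip v (M *ᵥ v)).re := by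
  open scoped MatrixOrder in obtain ⟨B, hB⟩ := CStarAlgebra.nonneg_iff_eq_star_mul_self.mp hM.nonneg
  rw [Matrix.star_eq_conjTranspose] at hB
  subst hB
  have key : ∀ a b : k → ℂ, ip a ((Bᴴ * B) *ᵥ b) = ip (B *ᵥ a) (B *ᵥ b) := by
    intro a b
    rw [ip_eq_dot, ip_eq_dot, ← Matrix.mulVec_mulVec, Matrix.dotProduct_mulVec,
      ← Matrix.star_mulVec]
  rw [key, key, key]
  exact cs_vec _ _

lemma psd_re_nonneg {k : Type*} [Fintype k] {M : Matrix k k ℂ} (hM : M.PosSemidef)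
    (x : k → ℂ) : 0 ≤ (ip x (M *ᵥ x)).re := by
  have h := hM.dotProduct_mulVec_nonneg x
  rw [Complex.le_def] at h
  exact h.1

lemma sqrt_two_cs {x y z w : ℝ} (hx : 0 ≤ x) (hy : 0 ≤ y) (hz : 0 ≤ z) (hw : 0 ≤ w) :
    Real.sqrt (x * y) + Real.sqrt (z * w) ≤ Real.sqrt ((x + z) * (y + w)) := by
  rw [Real.sqrt_mul hx y, Real.sqrt_mul hz w]
  apply Real.le_sqrt_of_sq_le
  have ex : Real.sqrt x ^ 2 = x := Real.sq_sqrt hx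
  have ey : Real.sqrt y ^ 2 = y := Real.sq_sqrt hy
  have ez : Real.sqrt z ^ 2 = z := Real.sq_sqrt hz
  have ew : Real.sqrt w ^ 2 = w := Real.sq_sqrt hw
  nlinarith [sq_nonneg (Real.sqrt x * Real.sqrt w - Real.sqrt z * Real.sqrt y)]

lemma ip_add_right {k : Type*} [Fintype k] (a b c : k → ℂ) :
    ip a (b + c) = ip a b + ip a c := by
  simp [ip_eq_dot, dotProduct_add]

lemma ip_sub_right {k : Type*} [Fintype k] (a b c : k → ℂ) :
    ip a (b - c) = ip a b - ip a c := by
  simp [ip_eq_dot, dotProduct_sub]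

lemma pair_bound {m : ℕ} {P Q : Matrix (Fin m) (Fin m) ℂ} (hP : P.PosSemidef) (hQ : Q.PosSemidef)
    (hR : (1 - P - Q).PosSemidef) (u v : Fin m → ℂ) (hu : ip u u = 1) (hv : ip v v = 1)
    {qi qk : ℝ} (hqi : 0 ≤ qi) (hqk : 0 ≤ qk) :
    qi * (ip u ((P - Q) *ᵥ u)).re - qk * (ip v ((P - Q) *ᵥ v)).re ≤
      Real.sqrt ((qi + qk) ^ 2 - 4 * qi * qk * ‖ip u v‖ ^ 2) := by
  set C := P - Q with hC
  have hMp : (1 + C).PosSemidef := by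
    have : 1 + C = P + (P + (1 - P - Q)) := by rw [hC]; abel
    rw [this]; exact hP.add (hP.add hR)
  have hMm : (1 - C).PosSemidef := by
    have : 1 - C = Q + (Q + (1 - P - Q)) := by rw [hC]; abel
    rw [this]; exact hQ.add (hQ.add hR)
  set A := (ip u (C *ᵥ u)).re with hA
  set B := (ip v (C *ᵥ v)).re with hB
  set γ := ip u v with hγ
  set c := ip u (C *ᵥ v) with hc
  have expandp : ∀ (a b : Fin m → ℂ), ip a ((1 + C) *ᵥ b) = ip a b + ip a (C *ᵥ b) := by
    intro a b
    rw [Matrix.add_mulVec, Matrix.one_mulVec, ip_add_right]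
  have expandm : ∀ (a b : Fin m → ℂ), ip a ((1 - C) *ᵥ b) = ip a b - ip a (C *ᵥ b) := by
    intro a b
    rw [Matrix.sub_mulVec, Matrix.one_mulVec, ip_sub_right]
  have h1pA : 0 ≤ 1 + A := by
    have := psd_re_nonneg hMp u
    rwa [expandp, Complex.add_re, hu, Complex.one_re] at this
  have h1mA : 0 ≤ 1 - A := by
    have := psd_re_nonneg hMm u
    rwa [expandm, Complex.sub_re, hu, Complex.one_re] at this
  have h1pB : 0 ≤ 1 + B := by
    have := psd_re_nonneg hMp v
    rwa [expandp, Complex.add_re, hv, Complex.one_re] at this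
  have h1mB : 0 ≤ 1 - B := by
    have := psd_re_nonneg hMm v
    rwa [expandm, Complex.sub_re, hv, Complex.one_re] at this
  have hcp : ‖γ + c‖ ^ 2 ≤ (1 + A) * (1 + B) := by
    have h := cs_mat hMp u v
    rwa [expandp, expandp, expandp, Complex.add_re, Complex.add_re, hu, hv,
      Complex.one_re, ← hA, ← hB, ← hγ, ← hc] at h
  have hcm : ‖γ - c‖ ^ 2 ≤ (1 - A) * (1 - B) := by
    have h := cs_mat hMm u v
    rwa [expandm, expandm, expandm, Complex.sub_re, Complex.sub_re, hu, hv,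
      Complex.one_re, ← hA, ← hB, ← hγ, ← hc] at h
  have hnp : ‖γ + c‖ ≤ Real.sqrt ((1 + A) * (1 + B)) := by
    have := Real.sqrt_le_sqrt hcp
    rwa [Real.sqrt_sq (norm_nonneg _)] at this
  have hnm : ‖γ - c‖ ≤ Real.sqrt ((1 - A) * (1 - B)) := by
    have := Real.sqrt_le_sqrt hcm
    rwa [Real.sqrt_sq (norm_nonneg _)] at this
  have htri : 2 * ‖γ‖ ≤ ‖γ + c‖ + ‖γ - c‖ := by
    have h := norm_add_le (γ + c) (γ - c)
    have e : (γ + c) + (γ - c) = (2 : ℂ) * γ := by ring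
    rw [e, norm_mul] at h
    simpa using h
  -- the weighted step
  have key : 2 * Real.sqrt (qi * qk) * ‖γ‖ ≤
      Real.sqrt ((qi * (1 + A) + qk * (1 - B)) * (qk * (1 + B) + qi * (1 - A))) := by
    have step1 : 2 * Real.sqrt (qi * qk) * ‖γ‖ ≤
        Real.sqrt (qi * qk) * (Real.sqrt ((1 + A) * (1 + B)) + Real.sqrt ((1 - A) * (1 - B))) := by
      have : Real.sqrt (qi * qk) * (2 * ‖γ‖) ≤
          Real.sqrt (qi * qk) * (‖γ + c‖ + ‖γ - c‖) :=
        mul_le_mul_of_nonneg_left htri (Real.sqrt_nonneg _)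
      calc 2 * Real.sqrt (qi * qk) * ‖γ‖ = Real.sqrt (qi * qk) * (2 * ‖γ‖) := by ring
        _ ≤ Real.sqrt (qi * qk) * (‖γ + c‖ + ‖γ - c‖) := this
        _ ≤ Real.sqrt (qi * qk) * (Real.sqrt ((1 + A) * (1 + B)) + Real.sqrt ((1 - A) * (1 - B))) := by
            apply mul_le_mul_of_nonneg_left _ (Real.sqrt_nonneg _)
            exact add_le_add hnp hnm
    have step2 : Real.sqrt (qi * qk) * (Real.sqrt ((1 + A) * (1 + B)) + Real.sqrt ((1 - A) * (1 - B)))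
        = Real.sqrt ((qi * (1 + A)) * (qk * (1 + B))) + Real.sqrt ((qk * (1 - B)) * (qi * (1 - A))) := by
      rw [mul_add, ← Real.sqrt_mul (by positivity), ← Real.sqrt_mul (by positivity)]
      ring_nf
    have step3 : Real.sqrt ((qi * (1 + A)) * (qk * (1 + B))) + Real.sqrt ((qk * (1 - B)) * (qi * (1 - A)))
        ≤ Real.sqrt ((qi * (1 + A) + qk * (1 - B)) * (qk * (1 + B) + qi * (1 - A))) :=
      sqrt_two_cs (by positivity) (by positivity) (by positivity) (by positivity)
    calc 2 * Real.sqrt (qi * qk) * ‖γ‖ ≤ _ := step1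
      _ = _ := step2
      _ ≤ _ := step3
  have keysq : 4 * qi * qk * ‖γ‖ ^ 2 ≤
      (qi * (1 + A) + qk * (1 - B)) * (qk * (1 + B) + qi * (1 - A)) := by
    have hlhs : 0 ≤ 2 * Real.sqrt (qi * qk) * ‖γ‖ := by positivity
    have h := pow_le_pow_left₀ hlhs key 2
    rw [Real.sq_sqrt (by positivity)] at h
    have e : (2 * Real.sqrt (qi * qk) * ‖γ‖) ^ 2 = 4 * (Real.sqrt (qi*qk))^2 * ‖γ‖^2 := by ring
    rw [e, Real.sq_sqrt (by positivity)] at h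
    linarith [h]
  have hX : (qi * A - qk * B) ^ 2 ≤ (qi + qk) ^ 2 - 4 * qi * qk * ‖γ‖ ^ 2 := by nlinarith [keysq]
  calc qi * A - qk * B ≤ |qi * A - qk * B| := le_abs_self _
    _ = Real.sqrt ((qi * A - qk * B) ^ 2) := (Real.sqrt_sq_eq_abs _).symm
    _ ≤ Real.sqrt ((qi + qk) ^ 2 - 4 * qi * qk * ‖γ‖ ^ 2) := Real.sqrt_le_sqrt hX

lemma psd_sum {m : ℕ} {ι : Type*} (s : Finset ι) (f : ι → Matrix (Fin m) (Fin m) ℂ)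
    (h : ∀ j ∈ s, (f j).PosSemidef) : (∑ j ∈ s, f j).PosSemidef := by
  classical
  induction s using Finset.induction_on with
  | empty =>
    rw [Finset.sum_empty]
    exact Matrix.PosSemidef.zero
  | insert _ _ hnotmem ih =>
    rename_i a t
    rw [Finset.sum_insert hnotmem]
    exact (h a (Finset.mem_insert_self a t)).add
      (ih fun j hj => h j (Finset.mem_insert_of_mem hj))

lemma sum_mulVec' {k : Type*} [Fintype k] {ι : Type*} (s : Finset ι)
    (A : ι → Matrix k k ℂ) (v : k → ℂ) :
    (∑ j ∈ s, A j) *ᵥ v = ∑ j ∈ s, (A j *ᵥ v) := by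
  ext x
  simp only [Matrix.mulVec, dotProduct, Matrix.sum_apply, Finset.sum_apply,
    Finset.sum_mul]
  exact Finset.sum_comm

lemma ip_sum_right {k : Type*} [Fintype k] {ι : Type*} (s : Finset ι) (a : k → ℂ)
    (f : ι → (k → ℂ)) : ip a (∑ j ∈ s, f j) = ∑ j ∈ s, ip a (f j) := by
  simp only [ip, Finset.sum_apply, Finset.mul_sum]
  exact Finset.sum_comm

lemma value_bound {m n : ℕ} (d : Fin n → Fin m → ℂ) (hd : ∀ i, ip (d i) (d i) = 1)
    (q : Fin n → ℝ) (hq0 : ∀ i, 0 ≤ q i)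
    (Pov : Fin n → Matrix (Fin m) (Fin m) ℂ) (hPov : ∀ i, (Pov i).PosSemidef)
    (hsum : (∑ i, Pov i) = 1) :
    (n : ℝ) * (∑ i, q i * (ip (d i) ((Pov i) *ᵥ (d i))).re) ≤ (∑ i, q i) +
      (1/2) * ∑ i, ∑ k, Real.sqrt ((q i + q k) ^ 2 - 4 * q i * q k * ‖ip (d i) (d k)‖ ^ 2) := by
  classical
  set T : Fin n → Fin n → ℝ :=
    fun i k => Real.sqrt ((q i + q k) ^ 2 - 4 * q i * q k * ‖ip (d i) (d k)‖ ^ 2) with hT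
  set G : Fin n → Fin n → ℝ :=
    fun i k => q i * (ip (d i) ((Pov i - Pov k) *ᵥ (d i))).re with hG
  -- step 1 : n * v = ∑ q + ∑∑ G
  have hexp : ∀ i k, G i k = q i * (ip (d i) ((Pov i) *ᵥ (d i))).re
      - q i * (ip (d i) ((Pov k) *ᵥ (d i))).re := by
    intro i k
    rw [hG]
    simp only [Matrix.sub_mulVec, ip_sub_right, Complex.sub_re]
    ring
  have htot : ∀ i, ∑ k, (ip (d i) ((Pov k) *ᵥ (d i))).re = 1 := by
    intro i
    have : ∑ k, ip (d i) ((Pov k) *ᵥ (d i)) = ip (d i) (d i) := by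
      rw [← ip_sum_right]
      congr 1
      rw [show ∑ j, Pov j *ᵥ d i = (∑ j, Pov j) *ᵥ d i from (sum_mulVec' _ _ _).symm,
        hsum, Matrix.one_mulVec]
    calc ∑ k, (ip (d i) ((Pov k) *ᵥ (d i))).re
        = (∑ k, ip (d i) ((Pov k) *ᵥ (d i))).re := by rw [Complex.re_sum]
      _ = 1 := by rw [this, hd i, Complex.one_re]
  have step1 : (n : ℝ) * (∑ i, q i * (ip (d i) ((Pov i) *ᵥ (d i))).re)
      = (∑ i, q i) + ∑ i, ∑ k, G i k := by
    have : ∀ i, ∑ k, G i k =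
        (n : ℝ) * (q i * (ip (d i) ((Pov i) *ᵥ (d i))).re) - q i := by
      intro i
      simp only [hexp]
      rw [Finset.sum_sub_distrib, Finset.sum_const, ← Finset.mul_sum, htot i,
        Finset.card_univ, Fintype.card_fin, nsmul_eq_mul]
      ring
    rw [Finset.sum_congr rfl (fun i _ => this i), Finset.sum_sub_distrib, ← Finset.mul_sum]
    ring
  rw [step1]
  -- step 2 : ∑∑ G ≤ (1/2) ∑∑ T
  have hsymm : ∑ i, ∑ k, G i k = (1/2) * ∑ i, ∑ k, (G i k + G k i) := by
    have hswap : ∑ i, ∑ k, G i k = ∑ i, ∑ k, G k i := Finset.sum_comm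
    rw [show ∑ i, ∑ k, (G i k + G k i) = (∑ i, ∑ k, G i k) + (∑ i, ∑ k, G k i) by
      rw [← Finset.sum_add_distrib]; exact Finset.sum_congr rfl fun i _ => Finset.sum_add_distrib]
    rw [← hswap]; ring
  have hpair : ∀ i k, G i k + G k i ≤ T i k := by
    intro i k
    by_cases hik : i = k
    · subst hik
      have h0 : G i i = 0 := by
        simp only [hG, sub_self, Matrix.zero_mulVec]
        simp [ip_eq_dot]
      rw [h0]
      have h1 : (q i + q i)^2 - 4 * q i * q i * ‖ip (d i) (d i)‖^2 = 0 := by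
        rw [hd i, norm_one]; ring
      simp only [hT, h1, add_zero, Real.sqrt_zero, le_refl]
    · -- off-diagonal : use pair_bound
      have hrest : (1 - Pov i - Pov k).PosSemidef := by
        have hk : k ∈ Finset.univ.erase i := Finset.mem_erase.mpr ⟨fun h => hik h.symm, Finset.mem_univ k⟩
        have e1 : (∑ j, Pov j) = Pov i + ∑ j ∈ Finset.univ.erase i, Pov j :=
          (Finset.add_sum_erase _ _ (Finset.mem_univ i)).symm
        have e2 : (∑ j ∈ Finset.univ.erase i, Pov j) =
            Pov k + ∑ j ∈ (Finset.univ.erase i).erase k, Pov j :=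
          (Finset.add_sum_erase _ _ hk).symm
        have : 1 - Pov i - Pov k = ∑ j ∈ (Finset.univ.erase i).erase k, Pov j := by
          rw [← hsum, e1, e2]; abel
        rw [this]
        exact psd_sum _ _ (fun j _ => hPov j)
      have hGki : G k i = - (q k * (ip (d k) ((Pov i - Pov k) *ᵥ (d k))).re) := by
        simp only [hG]
        have e : Pov k - Pov i = -(Pov i - Pov k) := by abel
        rw [e, Matrix.neg_mulVec]
        have e2 : ip (d k) (-((Pov i - Pov k) *ᵥ (d k))) = - ip (d k) ((Pov i - Pov k) *ᵥ (d k)) := by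
          simp [ip_eq_dot, dotProduct_neg]
        rw [e2, Complex.neg_re]
        ring
      have hpb := pair_bound (hPov i) (hPov k) hrest (d i) (d k) (hd i) (hd k) (hq0 i) (hq0 k)
      simp only [hG, hT]
      have e : q k * (ip (d k) ((Pov k - Pov i) *ᵥ d k)).re
          = - (q k * (ip (d k) ((Pov i - Pov k) *ᵥ (d k))).re) := by
        have e1 : Pov k - Pov i = -(Pov i - Pov k) := by abel
        rw [e1, Matrix.neg_mulVec]
        have e2 : ip (d k) (-((Pov i - Pov k) *ᵥ (d k))) = - ip (d k) ((Pov i - Pov k) *ᵥ (d k)) := by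
          simp [ip_eq_dot, dotProduct_neg]
        rw [e2, Complex.neg_re]
        ring
      rw [e]
      linarith [hpb]
  have step2 : ∑ i, ∑ k, (G i k + G k i) ≤ ∑ i, ∑ k, T i k := by
    apply Finset.sum_le_sum
    intro i _
    exact Finset.sum_le_sum fun k _ => hpair i k
  have : ∑ i, ∑ k, G i k ≤ (1/2) * ∑ i, ∑ k, T i k := by
    rw [hsymm]
    linarith [step2]
  linarith [this]

lemma uniform_psd {m n : ℕ} (hn : 0 < n) :
    (((n : ℂ))⁻¹ • (1 : Matrix (Fin m) (Fin m) ℂ)).PosSemidef := by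
  refine Matrix.PosSemidef.of_dotProduct_mulVec_nonneg ?_ ?_
  · unfold Matrix.IsHermitian
    rw [Matrix.conjTranspose_smul, Matrix.conjTranspose_one]
    congr 1
    simp
  · intro x
    rw [Matrix.smul_mulVec, Matrix.one_mulVec, dotProduct_smul]
    have h1 : (0:ℂ) ≤ (((n:ℂ))⁻¹) := by
      rw [show ((n:ℂ))⁻¹ = (((n:ℝ)⁻¹ : ℝ) : ℂ) by push_cast; ring]
      rw [Complex.le_def]
      refine ⟨by simp, by simp⟩
    have h2 : (0:ℂ) ≤ dotProduct (star x) x := dotProduct_star_self_nonneg x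
    rw [smul_eq_mul]
    exact mul_nonneg h1 h2

lemma mem_value_set {m n : ℕ} (hn : 0 < n) (d : Fin n → Fin m → ℂ)
    (hd : ∀ i, ip (d i) (d i) = 1) (q : Fin n → ℝ) (hq1 : ∑ i, q i = 1) :
    (1 / n : ℝ) ∈ { x : ℝ | ∃ Pov : Fin n → Matrix (Fin m) (Fin m) ℂ,
      (∀ i, (Pov i).PosSemidef) ∧ (∑ i, Pov i) = 1 ∧
      x = ∑ i, q i * (ip (d i) ((Pov i) *ᵥ (d i))).re } := by
  refine ⟨fun _ => ((n : ℂ))⁻¹ • 1, fun i => uniform_psd hn, ?_, ?_⟩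
  · rw [Finset.sum_const, Finset.card_univ, Fintype.card_fin,
      ← Nat.cast_smul_eq_nsmul ℂ, smul_smul,
      mul_inv_cancel₀ (by exact_mod_cast hn.ne' : (n:ℂ) ≠ 0), one_smul]
  · have hval : ∀ i, (ip (d i) ((((n : ℂ))⁻¹ • (1 : Matrix (Fin m) (Fin m) ℂ)) *ᵥ (d i))).re
        = (1 / n : ℝ) := by
      intro i
      rw [Matrix.smul_mulVec, Matrix.one_mulVec, ip_eq_dot, dotProduct_smul,
        smul_eq_mul, ← ip_eq_dot, hd i, mul_one]
      rw [show ((n:ℂ))⁻¹ = (((n:ℝ)⁻¹ : ℝ) : ℂ) by push_cast; ring, Complex.ofReal_re]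
      rw [one_div]
    rw [show ∑ i, q i * (ip (d i) ((((n : ℂ))⁻¹ • (1 : Matrix (Fin m) (Fin m) ℂ)) *ᵥ (d i))).re
        = ∑ i, q i * (1/n : ℝ) from Finset.sum_congr rfl (fun i _ => by rw [hval i])]
    rw [← Finset.sum_mul, hq1, one_mul]

lemma ip_star {k : Type*} [Fintype k] (a b : k → ℂ) : star (ip a b) = ip b a := by
  simp only [ip, star_sum, star_mul', star_star]
  exact Finset.sum_congr rfl fun i _ => by ring

lemma vvmul {m : ℕ} (u a v b : Fin m → ℂ) :
    Matrix.vecMulVec u a * Matrix.vecMulVec v b = (a ⬝ᵥ v) • Matrix.vecMulVec u b := by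
  ext x y
  simp only [Matrix.mul_apply, Matrix.vecMulVec_apply, Matrix.smul_apply, dotProduct,
    smul_eq_mul, Finset.sum_mul]
  exact Finset.sum_congr rfl fun j _ => by ring

lemma trace_vv {m : ℕ} (u b : Fin m → ℂ) : (Matrix.vecMulVec u b).trace = b ⬝ᵥ u := by
  simp [Matrix.trace, Matrix.vecMulVec_apply, dotProduct, mul_comm]

lemma purity_det {m n : ℕ} (d : Fin n → Fin m → ℂ) (q : Fin n → ℝ) :
    purity (detState d q) = ∑ i, ∑ k, (q i * q k) * ‖ip (d i) (d k)‖ ^ 2 := by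
  have key : (detState d q * detState d q).trace
      = ∑ i, ∑ k, (((q i * q k : ℝ)) * ‖ip (d i) (d k)‖ ^ 2 : ℂ) := by
    rw [detState, Finset.sum_mul_sum]
    rw [Matrix.trace_sum]
    refine Finset.sum_congr rfl fun i _ => ?_
    rw [Matrix.trace_sum]
    refine Finset.sum_congr rfl fun k _ => ?_
    rw [Matrix.smul_mul, Matrix.mul_smul, smul_smul, vvmul, smul_smul, Matrix.trace_smul,
      trace_vv, smul_eq_mul]
    have e1 : star (d i) ⬝ᵥ (d k) = ip (d i) (d k) := (ip_eq_dot _ _).symm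
    have e2 : star (d k) ⬝ᵥ (d i) = ip (d k) (d i) := (ip_eq_dot _ _).symm
    rw [e1, e2]
    have e3 : ip (d i) (d k) * ip (d k) (d i) = ((‖ip (d i) (d k)‖ ^ 2 : ℝ) : ℂ) := by
      rw [← ip_star (d i) (d k), Complex.star_def, Complex.mul_conj]
      norm_cast
      rw [Complex.sq_norm]
    rw [mul_assoc, e3]
    push_cast
    ring
  rw [purity]
  rw [key, Complex.re_sum]
  refine Finset.sum_congr rfl fun i _ => ?_
  rw [Complex.re_sum]
  refine Finset.sum_congr rfl fun k _ => ?_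
  norm_cast

lemma purity_post {m n : ℕ} (d : Fin n → Fin m → ℂ) (ρ : Matrix (Fin n) (Fin n) ℂ)
    (hherm : ρ.IsHermitian) :
    purity (post d ρ) = ∑ i, ∑ k, ‖ip (d k) (d i)‖ ^ 2 * ‖ρ i k‖ ^ 2 := by
  have key : (post d ρ * post d ρ).trace
      = ∑ i, ∑ k, ((‖ip (d k) (d i)‖ ^ 2 * ‖ρ i k‖ ^ 2 : ℝ) : ℂ) := by
    rw [Matrix.trace]
    refine Finset.sum_congr rfl fun i _ => ?_
    rw [Matrix.diag_apply, Matrix.mul_apply]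
    refine Finset.sum_congr rfl fun k _ => ?_
    have e1 : post d ρ i k = ip (d k) (d i) * ρ i k := rfl
    have e2 : post d ρ k i = star (ip (d k) (d i)) * star (ρ i k) := by
      have h1 : post d ρ k i = ip (d i) (d k) * ρ k i := rfl
      rw [h1, ← ip_star (d k) (d i), ← hherm.apply k i]
    rw [e1, e2]
    rw [show ip (d k) (d i) * ρ i k * (star (ip (d k) (d i)) * star (ρ i k))
      = (ip (d k) (d i) * star (ip (d k) (d i))) * (ρ i k * star (ρ i k)) by ring]
    rw [Complex.star_def, Complex.mul_conj, Complex.mul_conj]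
    norm_cast
    rw [Complex.sq_norm, Complex.sq_norm]
  rw [purity]
  rw [key, Complex.re_sum]
  refine Finset.sum_congr rfl fun i _ => ?_
  rw [Complex.re_sum]
  refine Finset.sum_congr rfl fun k _ => ?_
  norm_cast

lemma double_sum_split {n : ℕ} (f : Fin n → Fin n → ℝ) :
    ∑ i, ∑ k, f i k = (∑ i, ∑ k, if i = k then 0 else f i k) + ∑ i, f i i := by
  rw [← Finset.sum_add_distrib]
  refine Finset.sum_congr rfl fun i _ => ?_
  have : f i i = ∑ k, if i = k then f i k else 0 := by rw [Finset.sum_ite_eq]; simp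
  rw [this, ← Finset.sum_add_distrib]
  exact Finset.sum_congr rfl fun k _ => by by_cases h : i = k <;> simp [h]

lemma diag_nonneg' {n : ℕ} {ρ : Matrix (Fin n) (Fin n) ℂ} (h : ρ.PosSemidef) (i : Fin n) :
    0 ≤ ρ i i := by
  have h2 := h.dotProduct_mulVec_nonneg (Pi.single i 1)
  simpa [Matrix.mulVec, dotProduct, Pi.single_apply] using h2

lemma Ps_le_bound {m n : ℕ} (hn : 0 < n) (d : Fin n → Fin m → ℂ)
    (hd : ∀ i, ip (d i) (d i) = 1) (q : Fin n → ℝ) (hq0 : ∀ i, 0 ≤ q i)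
    (hq1 : ∑ i, q i = 1) :
    Ps d q ≤ (1 + (1/2) * ∑ i, ∑ k,
      Real.sqrt ((q i + q k) ^ 2 - 4 * q i * q k * ‖ip (d i) (d k)‖ ^ 2)) / n := by
  have hR : (0:ℝ) ≤ ∑ i, ∑ k,
      Real.sqrt ((q i + q k) ^ 2 - 4 * q i * q k * ‖ip (d i) (d k)‖ ^ 2) :=
    Finset.sum_nonneg fun i _ => Finset.sum_nonneg fun k _ => Real.sqrt_nonneg _
  apply Real.sSup_le
  · rintro x ⟨Pov, hPov, hsum, rfl⟩
    have hv := value_bound d hd q hq0 Pov hPov hsum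
    rw [hq1] at hv
    rw [le_div_iff₀ (by exact_mod_cast hn : (0:ℝ) < n)]
    linarith
  · apply div_nonneg (by linarith) (by exact_mod_cast hn.le)

lemma Ps_ge_bound {m n : ℕ} (hn : 0 < n) (d : Fin n → Fin m → ℂ)
    (hd : ∀ i, ip (d i) (d i) = 1) (q : Fin n → ℝ) (hq0 : ∀ i, 0 ≤ q i)
    (hq1 : ∑ i, q i = 1) :
    (1/n : ℝ) ≤ Ps d q := by
  apply le_csSup
  · refine ⟨(1 + (1/2) * ∑ i, ∑ k,
      Real.sqrt ((q i + q k) ^ 2 - 4 * q i * q k * ‖ip (d i) (d k)‖ ^ 2)) / n, ?_⟩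
    rintro x ⟨Pov, hPov, hsum, rfl⟩
    have hv := value_bound d hd q hq0 Pov hPov hsum
    rw [hq1] at hv
    rw [le_div_iff₀ (by exact_mod_cast hn : (0:ℝ) < n)]
    linarith
  · exact mem_value_set hn d hd q hq1

/-- triality among path distinguishability, visibility and mixedness in the
`n`-path interferometer with detectors and quantum memory. -/
theorem stmt2 (n m : ℕ) (hn : 2 ≤ n) (d : Fin n → Fin m → ℂ)
    (hd : ∀ i, ip (d i) (d i) = 1)
    (ρA : Matrix (Fin n) (Fin n) ℂ) (hpsd : ρA.PosSemidef) (htr : ρA.trace = 1)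
    (q : Fin n → ℝ) (hq : ∀ i, (q i : ℂ) = ρA i i) :
    (Ps d q - 1 / n) ^ 2 + (Vis d ρA) ^ 2 + Mix n (post d ρA) ≤
      (1 - 1 / (n : ℝ)) ^ 2 + Mix n (detState d q) := by
  classical
  have hn0 : 0 < n := lt_of_lt_of_le two_pos hn
  have hnR : (2:ℝ) ≤ (n:ℝ) := by exact_mod_cast hn
  have hnR0 : (0:ℝ) < (n:ℝ) := by linarith
  have hnne : (n:ℝ) ≠ 0 := ne_of_gt hnR0
  -- basic facts about q
  have hq0 : ∀ i, 0 ≤ q i := by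
    intro i
    have h1 := diag_nonneg' hpsd i
    rw [← hq i, Complex.le_def] at h1
    simpa using h1.1
  have hq1 : ∑ i, q i = 1 := by
    have h1 : ((∑ i, q i : ℝ) : ℂ) = 1 := by
      push_cast
      rw [show ∑ i, ((q i : ℝ) : ℂ) = ρA.trace from Finset.sum_congr rfl fun i _ => hq i, htr]
    exact_mod_cast h1
  set c : ℝ := 2 * ((n : ℝ) - 1) / (n : ℝ) ^ 2 with hc
  have hc0 : 0 ≤ c := by
    rw [hc]; apply div_nonneg (by linarith) (by positivity)
  set W : ℝ := ∑ i, ∑ k, if i = k then (0:ℝ) else ‖ip (d k) (d i)‖ ^ 2 * ‖ρA i k‖ ^ 2 with hW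
  set S : ℝ := ∑ i, ∑ k, if i = k then (0:ℝ) else (q i * q k) * ‖ip (d i) (d k)‖ ^ 2 with hS
  have hW0 : 0 ≤ W := by
    rw [hW]
    apply Finset.sum_nonneg; intro i _
    apply Finset.sum_nonneg; intro k _
    split
    · exact le_refl 0
    · positivity
  -- purity computations
  have hqsq : ∀ i, ‖ρA i i‖ ^ 2 = q i ^ 2 := by
    intro i
    rw [← hq i, Complex.norm_real, Real.norm_eq_abs, sq_abs]
  have hpp : purity (post d ρA) = W + ∑ i, q i ^ 2 := by
    rw [purity_post d ρA hpsd.1,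
      double_sum_split (fun i k => ‖ip (d k) (d i)‖ ^ 2 * ‖ρA i k‖ ^ 2)]
    congr 1
    refine Finset.sum_congr rfl fun i _ => ?_
    rw [hd i, norm_one, hqsq i]
    ring
  have hpd : purity (detState d q) = S + ∑ i, q i ^ 2 := by
    rw [purity_det d q,
      double_sum_split (fun i k => (q i * q k) * ‖ip (d i) (d k)‖ ^ 2)]
    congr 1
    refine Finset.sum_congr rfl fun i _ => ?_
    rw [hd i, norm_one]
    ring
  have hVis2 : (Vis d ρA) ^ 2 = c * W := by
    rw [Vis, Real.sq_sqrt (mul_nonneg hc0 hW0)]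
  -- it suffices to prove the key inequality
  have hMixpost : Mix n (post d ρA) = c * (1 - (W + ∑ i, q i ^ 2)) := by
    rw [Mix, hpp]
  have hMixdet : Mix n (detState d q) = c * (1 - (S + ∑ i, q i ^ 2)) := by
    rw [Mix, hpd]
  rw [hVis2, hMixpost, hMixdet]
  have key : (Ps d q - 1 / n) ^ 2 + c * S ≤ (1 - 1 / (n:ℝ)) ^ 2 := by
    set P := Ps d q with hP
    set R : ℝ := ∑ i, ∑ k,
      Real.sqrt ((q i + q k) ^ 2 - 4 * q i * q k * ‖ip (d i) (d k)‖ ^ 2) with hR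
    have hPge : (1/(n:ℝ)) ≤ P := Ps_ge_bound hn0 d hd q hq0 hq1
    have hPle : P ≤ (1 + (1/2) * R) / n := Ps_le_bound hn0 d hd q hq0 hq1
    have hR0 : 0 ≤ R := by
      rw [hR]
      exact Finset.sum_nonneg fun i _ => Finset.sum_nonneg fun k _ => Real.sqrt_nonneg _
    -- norms of overlaps are at most 1
    have hγle : ∀ i k, ‖ip (d i) (d k)‖ ^ 2 ≤ 1 := by
      intro i k
      have h1 := cs_vec (d i) (d k)
      rw [hd i, hd k] at h1
      simpa using h1
    have hwik : ∀ i k, i ≠ k → q i + q k ≤ 1 := by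
      intro i k hik
      have h1 : q k ≤ ∑ j ∈ Finset.univ.erase i, q j :=
        Finset.single_le_sum (fun j _ => hq0 j)
          (Finset.mem_erase.mpr ⟨Ne.symm hik, Finset.mem_univ k⟩)
      have h2 : ∑ j ∈ Finset.univ.erase i, q j = 1 - q i := by
        rw [Finset.sum_erase_eq_sub (Finset.mem_univ i), hq1]
      linarith
    have hu0 : ∀ i k, i ≠ k → 0 ≤ q i + q k - 4 * q i * q k * ‖ip (d i) (d k)‖ ^ 2 := by
      intro i k hik
      have h1 := hγle i k
      have h2 : (0:ℝ) ≤ ‖ip (d i) (d k)‖ ^ 2 := by positivity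
      have h3 := hwik i k hik
      nlinarith [mul_nonneg (add_nonneg (hq0 i) (hq0 k)) (by linarith : (0:ℝ) ≤ 1 - (q i + q k)),
        sq_nonneg (q i - q k),
        mul_nonneg (mul_nonneg (hq0 i) (hq0 k)) (by linarith : (0:ℝ) ≤ 1 - ‖ip (d i) (d k)‖ ^ 2)]
    -- pointwise bound on T
    set f : Fin n × Fin n → ℝ :=
      fun p => if p.1 = p.2 then 0 else Real.sqrt (q p.1 + q p.2) with hf
    set g : Fin n × Fin n → ℝ :=
      fun p => if p.1 = p.2 then 0 else
        Real.sqrt (q p.1 + q p.2 - 4 * q p.1 * q p.2 * ‖ip (d p.1) (d p.2)‖ ^ 2) with hg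
    have hT : ∀ i k, Real.sqrt ((q i + q k) ^ 2 - 4 * q i * q k * ‖ip (d i) (d k)‖ ^ 2)
        ≤ f (i, k) * g (i, k) := by
      intro i k
      by_cases hik : i = k
      · subst hik
        simp only [hf, hg, if_pos rfl, mul_zero, zero_mul]
        rw [hd i, norm_one]
        rw [show (q i + q i) ^ 2 - 4 * q i * q i * (1:ℝ) ^ 2 = 0 by ring, Real.sqrt_zero]
      · simp only [hf, hg, if_neg hik]
        have h1 : (q i + q k) ^ 2 - 4 * q i * q k * ‖ip (d i) (d k)‖ ^ 2
            ≤ (q i + q k) * (q i + q k - 4 * q i * q k * ‖ip (d i) (d k)‖ ^ 2) := by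
          have := hwik i k hik
          nlinarith [mul_nonneg (mul_nonneg (hq0 i) (hq0 k)) (sq_nonneg ‖ip (d i) (d k)‖)]
        calc Real.sqrt ((q i + q k) ^ 2 - 4 * q i * q k * ‖ip (d i) (d k)‖ ^ 2)
            ≤ Real.sqrt ((q i + q k) * (q i + q k - 4 * q i * q k * ‖ip (d i) (d k)‖ ^ 2)) :=
              Real.sqrt_le_sqrt h1
          _ = _ := Real.sqrt_mul (add_nonneg (hq0 i) (hq0 k)) _
    -- sum computations
    have hsumw : ∑ i, ∑ k, (if i = k then (0:ℝ) else q i + q k) = 2 * (n:ℝ) - 2 := by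
      have hsplit := double_sum_split (fun i k => q i + q k)
      have h1 : ∑ i : Fin n, ∑ k : Fin n, (q i + q k) = 2 * (n:ℝ) := by
        have h2 : ∀ i : Fin n, ∑ k : Fin n, (q i + q k) = (n:ℝ) * q i + 1 := by
          intro i
          rw [Finset.sum_add_distrib, Finset.sum_const, hq1, Finset.card_univ,
            Fintype.card_fin, nsmul_eq_mul]
        rw [Finset.sum_congr rfl fun i _ => h2 i, Finset.sum_add_distrib,
          ← Finset.mul_sum, hq1, Finset.sum_const, Finset.card_univ, Fintype.card_fin,
          nsmul_eq_mul]
        ring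
      have h3 : ∑ i : Fin n, (q i + q i) = 2 := by
        rw [show ∑ i : Fin n, (q i + q i) = 2 * ∑ i, q i by rw [Finset.mul_sum]; exact Finset.sum_congr rfl fun i _ => by ring, hq1]
        ring
      rw [h1, h3] at hsplit
      linarith
    have hsumu : ∑ i, ∑ k, (if i = k then (0:ℝ) else
        q i + q k - 4 * q i * q k * ‖ip (d i) (d k)‖ ^ 2) = (2 * (n:ℝ) - 2) - 4 * S := by
      have hpt : ∀ i k : Fin n, (if i = k then (0:ℝ) else
          q i + q k - 4 * q i * q k * ‖ip (d i) (d k)‖ ^ 2)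
          = (if i = k then (0:ℝ) else q i + q k)
            - 4 * (if i = k then (0:ℝ) else (q i * q k) * ‖ip (d i) (d k)‖ ^ 2) := by
        intro i k
        by_cases h : i = k <;> simp [h] <;> ring
      rw [Finset.sum_congr rfl fun i _ => Finset.sum_congr rfl fun k _ => hpt i k]
      rw [Finset.sum_congr rfl fun i _ => Finset.sum_sub_distrib _ _, Finset.sum_sub_distrib]
      rw [hsumw]
      rw [show ∑ i : Fin n, ∑ k : Fin n, 4 * (if i = k then (0:ℝ) else (q i * q k) * ‖ip (d i) (d k)‖ ^ 2)
        = 4 * S from by rw [hS, Finset.mul_sum]; exact Finset.sum_congr rfl fun i _ => by rw [Finset.mul_sum]]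
    -- Cauchy–Schwarz
    have hf2 : ∑ p : Fin n × Fin n, f p ^ 2 = 2 * (n:ℝ) - 2 := by
      rw [Fintype.sum_prod_type, ← hsumw]
      refine Finset.sum_congr rfl fun i _ => Finset.sum_congr rfl fun k _ => ?_
      simp only [hf]
      by_cases h : i = k
      · simp [h]
      · simp only [if_neg h]
        exact Real.sq_sqrt (add_nonneg (hq0 i) (hq0 k))
    have hg2 : ∑ p : Fin n × Fin n, g p ^ 2 = (2 * (n:ℝ) - 2) - 4 * S := by
      rw [Fintype.sum_prod_type, ← hsumu]
      refine Finset.sum_congr rfl fun i _ => Finset.sum_congr rfl fun k _ => ?_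
      simp only [hg]
      by_cases h : i = k
      · simp [h]
      · simp only [if_neg h]
        exact Real.sq_sqrt (hu0 i k h)
    have hRle : R ≤ ∑ p : Fin n × Fin n, f p * g p := by
      have hRe : R = ∑ p : Fin n × Fin n,
          Real.sqrt ((q p.1 + q p.2) ^ 2 - 4 * q p.1 * q p.2 * ‖ip (d p.1) (d p.2)‖ ^ 2) := by
        rw [hR, Fintype.sum_prod_type]
      rw [hRe]
      exact Finset.sum_le_sum fun p _ => hT p.1 p.2
    have hfg0 : 0 ≤ ∑ p : Fin n × Fin n, f p * g p := le_trans hR0 hRle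
    have hcs := Finset.sum_mul_sq_le_sq_mul_sq Finset.univ f g
    rw [hf2, hg2] at hcs
    have hR2 : R ^ 2 ≤ (2 * (n:ℝ) - 2) * ((2 * (n:ℝ) - 2) - 4 * S) := by
      calc R ^ 2 ≤ (∑ p : Fin n × Fin n, f p * g p) ^ 2 := pow_le_pow_left₀ hR0 hRle 2
        _ ≤ _ := hcs
    -- final arithmetic
    have e1 : P - 1/(n:ℝ) ≤ R / (2 * (n:ℝ)) := by
      have h4 : (1 + (1/2) * R) / (n:ℝ) = 1/(n:ℝ) + R / (2 * (n:ℝ)) := by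
        rw [div_add_div _ _ hnne (by positivity : 2 * (n:ℝ) ≠ 0)]
        rw [div_eq_div_iff (by positivity) (by positivity)]
        ring
      rw [h4] at hPle
      linarith
    have e2 : 0 ≤ P - 1/(n:ℝ) := by linarith
    have e3 : (P - 1/(n:ℝ)) ^ 2 ≤ (R / (2 * (n:ℝ))) ^ 2 := pow_le_pow_left₀ e2 e1 2
    have e4 : (R / (2 * (n:ℝ))) ^ 2 = R ^ 2 / (4 * (n:ℝ) ^ 2) := by
      rw [div_pow]
      congr 1
      ring
    have e5 : R ^ 2 / (4 * (n:ℝ) ^ 2) ≤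
        ((2 * (n:ℝ) - 2) * ((2 * (n:ℝ) - 2) - 4 * S)) / (4 * (n:ℝ) ^ 2) := by
      apply div_le_div_of_nonneg_right hR2 (by positivity)
    have e6 : ((2 * (n:ℝ) - 2) * ((2 * (n:ℝ) - 2) - 4 * S)) / (4 * (n:ℝ) ^ 2) + c * S
        = (1 - 1/(n:ℝ)) ^ 2 := by
      rw [hc]
      field_simp
      ring
    linarith
  linarith [key, mul_le_mul_of_nonneg_left (le_refl (0:ℝ)) hc0]
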